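/- arXiv:math/0405019 — 2 statements merged into one kernel-verified Lean document; each statement's English description precedes it below -/
import Mathlib

section
/- For a lattice L in ℝ² (a discrete cocompact subgroup of rank 2) with λ₁(L) the least Euclidean norm of a nonzero lattice vector, one has λ₁(L)² ≤ (2/√3) · covol(L), where covol(L) is the area of a fundamental domain; equivalently the Hermite constant γ₂ equals 2/√3, attained by the hexagonal lattice. -/
open scoped RealInnerProductSpace

open MeasureTheory Submodule

/-- Existence of a norm-minimizing lattice vector among those satisfying `P`. -/
lemma exists_norm_min (L : Submodule ℤ (EuclideanSpace ℝ (Fin 2)))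
    [DiscreteTopology L] (P : EuclideanSpace ℝ (Fin 2) → Prop)
    (h : ∃ w ∈ L, P w) :
    ∃ v ∈ L, P v ∧ ∀ w ∈ L, P w → ‖v‖ ≤ ‖w‖ := by
  obtain ⟨w₀, hw₀L, hw₀P⟩ := h
  have hfin : Set.Finite ((Metric.closedBall (0 : EuclideanSpace ℝ (Fin 2)) ‖w₀‖
      ∩ (L : Set (EuclideanSpace ℝ (Fin 2)))) ∩ {x | P x}) := by
    apply Set.Finite.inter_of_left
    change Set.Finite ((_ : Set (EuclideanSpace ℝ (Fin 2))) ∩ L.toAddSubgroup)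
    have : DiscreteTopology L.toAddSubgroup := (inferInstance : DiscreteTopology L)
    exact Metric.finite_isBounded_inter_isClosed DiscreteTopology.isDiscrete Metric.isBounded_closedBall inferInstance
  have hne : ((Metric.closedBall (0 : EuclideanSpace ℝ (Fin 2)) ‖w₀‖
      ∩ (L : Set (EuclideanSpace ℝ (Fin 2)))) ∩ {x | P x}).Nonempty :=
    ⟨w₀, ⟨Metric.mem_closedBall.2 (by simp), hw₀L⟩, hw₀P⟩
  obtain ⟨v, ⟨⟨hvb, hvL⟩, hvP⟩, hmin⟩ := Set.exists_min_image _ (fun x => ‖x‖) hfin hne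
  refine ⟨v, hvL, hvP, fun w hwL hwP => ?_⟩
  by_cases hw : ‖w‖ ≤ ‖w₀‖
  · exact hmin w ⟨⟨Metric.mem_closedBall.2 (by simpa using hw), hwL⟩, hwP⟩
  · have h1 : ‖v‖ ≤ ‖w₀‖ := by simpa using Metric.mem_closedBall.1 hvb
    linarith

set_option maxHeartbeats 1000000 in
/-- Hermite's inequality in dimension 2: for a lattice `L ⊂ ℝ²`, the least
norm `λ₁(L)` of a nonzero vector satisfies `λ₁(L)² ≤ (2/√3)·covol(L)`. -/
theorem stmt_10 (L : Submodule ℤ (EuclideanSpace ℝ (Fin 2)))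
    [DiscreteTopology L] [IsZLattice ℝ L] :
    (sInf {r : ℝ | ∃ v ∈ L, v ≠ 0 ∧ ‖v‖ = r}) ^ 2
      ≤ (2 / Real.sqrt 3) * ZLattice.covolume L := by
  classical
  have hspan : span ℝ (L : Set (EuclideanSpace ℝ (Fin 2))) = ⊤ := IsZLattice.span_top
  -- there is a nonzero lattice vector
  have hex0 : ∃ w ∈ L, w ≠ 0 := by
    by_contra h
    push_neg at h
    have h1 : span ℝ (L : Set (EuclideanSpace ℝ (Fin 2))) ≤ span ℝ ({0} : Set (EuclideanSpace ℝ (Fin 2))) :=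
      span_mono (fun x hx => h x hx)
    rw [hspan, span_zero_singleton] at h1
    have h2 : Module.finrank ℝ (EuclideanSpace ℝ (Fin 2)) = 0 := by
      rw [← finrank_top ℝ (EuclideanSpace ℝ (Fin 2)), le_bot_iff.1 h1, finrank_bot]
    rw [finrank_euclideanSpace] at h2
    simp at h2
  -- shortest vector v
  obtain ⟨v, hvL, hv0, hvmin⟩ := exists_norm_min L (fun x => x ≠ 0) hex0
  -- a vector outside the line ℝv
  have hex1 : ∃ w ∈ L, w ∉ span ℝ ({v} : Set (EuclideanSpace ℝ (Fin 2))) := by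
    by_contra h
    push_neg at h
    have h1 : span ℝ (L : Set (EuclideanSpace ℝ (Fin 2))) ≤ span ℝ ({v} : Set (EuclideanSpace ℝ (Fin 2))) :=
      span_le.2 (fun x hx => h x hx)
    rw [hspan] at h1
    have h2 : Module.finrank ℝ (EuclideanSpace ℝ (Fin 2)) ≤ 1 := by
      calc Module.finrank ℝ (EuclideanSpace ℝ (Fin 2)) = Module.finrank ℝ (⊤ : Submodule ℝ (EuclideanSpace ℝ (Fin 2))) := (finrank_top ℝ (EuclideanSpace ℝ (Fin 2))).symm
        _ ≤ Module.finrank ℝ (span ℝ ({v} : Set (EuclideanSpace ℝ (Fin 2)))) := Submodule.finrank_mono h1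
        _ = 1 := finrank_span_singleton hv0
    rw [finrank_euclideanSpace] at h2
    simp at h2
  obtain ⟨u, huL, huv, humin⟩ := exists_norm_min L (fun x => x ∉ span ℝ ({v} : Set (EuclideanSpace ℝ (Fin 2)))) hex1
  have hu0 : u ≠ 0 := fun h => huv (h ▸ zero_mem _)
  have hvu : ‖v‖ ≤ ‖u‖ := hvmin u huL hu0
  have hvpos : 0 < ‖v‖ := norm_pos_iff.2 hv0
  have hupos : 0 < ‖u‖ := norm_pos_iff.2 hu0
  -- inner product bound
  have hip : |⟪u, v⟫| ≤ ‖v‖ ^ 2 / 2 := by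
    have hsub : u - v ∉ span ℝ ({v} : Set (EuclideanSpace ℝ (Fin 2))) := fun h => by
      have h2 : u ∈ span ℝ ({v} : Set (EuclideanSpace ℝ (Fin 2))) := by
        have := add_mem h (mem_span_singleton_self v); simpa using this
      exact huv h2
    have hadd : u + v ∉ span ℝ ({v} : Set (EuclideanSpace ℝ (Fin 2))) := fun h => by
      have h2 : u ∈ span ℝ ({v} : Set (EuclideanSpace ℝ (Fin 2))) := by
        have := sub_mem h (mem_span_singleton_self v); simpa using this
      exact huv h2
    have h1 : ‖u‖ ^ 2 ≤ ‖u - v‖ ^ 2 :=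
      pow_le_pow_left₀ (norm_nonneg u) (humin _ (sub_mem huL hvL) hsub) 2
    have h2 : ‖u‖ ^ 2 ≤ ‖u + v‖ ^ 2 :=
      pow_le_pow_left₀ (norm_nonneg u) (humin _ (add_mem huL hvL) hadd) 2
    rw [norm_sub_sq_real] at h1
    rw [norm_add_sq_real] at h2
    rw [abs_le]
    constructor <;> nlinarith
  -- ℝ-linear independence of v, u
  have hli : LinearIndependent ℝ ![v, u] := by
    rw [LinearIndependent.pair_iff]
    intro s t hst
    have ht : t = 0 := by
      by_contra ht0
      have : u = (-(s / t)) • v := by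
        have h2 : t • u = -(s • v) := by
          rw [eq_neg_iff_add_eq_zero, add_comm]; exact hst
        have h3 : u = t⁻¹ • (t • u) := by rw [smul_smul, inv_mul_cancel₀ ht0, one_smul]
        rw [h3, h2, smul_neg, smul_smul, ← neg_smul]
        ring_nf
      exact absurd (mem_span_singleton.2 ⟨-(s / t), this.symm⟩) huv
    refine ⟨?_, ht⟩
    rw [ht, zero_smul, add_zero, smul_eq_zero] at hst
    exact hst.resolve_right hv0
  -- every lattice vector is an integer combination of v and u
  have key : ∀ w ∈ L, ∃ m n : ℤ, w = m • v + n • u := by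
    intro w hwL
    have hcard : Fintype.card (Fin 2) = Module.finrank ℝ (EuclideanSpace ℝ (Fin 2)) := by
      simp [finrank_euclideanSpace]
    set B : Module.Basis (Fin 2) ℝ (EuclideanSpace ℝ (Fin 2)) := basisOfLinearIndependentOfCardEqFinrank hli hcard with hB
    have hBcoe : ⇑B = ![v, u] := coe_basisOfLinearIndependentOfCardEqFinrank hli hcard
    set a : ℝ := B.repr w 0 with ha
    set b : ℝ := B.repr w 1 with hb
    have hw : w = a • v + b • u := by
      have := B.sum_repr w
      rw [Fin.sum_univ_two, hBcoe] at this
      simpa using this.symm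
    set α : ℝ := a - (round a : ℝ) with hα
    set β : ℝ := b - (round b : ℝ) with hβ
    set w' : (EuclideanSpace ℝ (Fin 2)) := w - (round a : ℝ) • v - (round b : ℝ) • u with hw'
    have hw'L : w' ∈ L := by
      rw [hw']
      refine sub_mem (sub_mem hwL ?_) ?_
      · rw [Int.cast_smul_eq_zsmul]; exact zsmul_mem hvL _
      · rw [Int.cast_smul_eq_zsmul]; exact zsmul_mem huL _
    have hw'eq : w' = α • v + β • u := by
      rw [hw', hw, hα, hβ]
      module
    have hαle : |α| ≤ 1 / 2 := abs_sub_round a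
    have hβle : |β| ≤ 1 / 2 := abs_sub_round b
    have hβ0 : β = 0 := by
      by_contra hβ0
      have hw'span : w' ∉ span ℝ ({v} : Set (EuclideanSpace ℝ (Fin 2))) := by
        intro h
        obtain ⟨c, hc⟩ := mem_span_singleton.1 h
        have h4 : β • u ∈ span ℝ ({v} : Set (EuclideanSpace ℝ (Fin 2))) := by
          have h5 := sub_mem h (smul_mem _ α (mem_span_singleton_self v))
          rw [hw'eq] at h5
          simpa using h5
        have h6 := smul_mem (span ℝ ({v} : Set (EuclideanSpace ℝ (Fin 2)))) β⁻¹ h4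
        rw [smul_smul, inv_mul_cancel₀ hβ0, one_smul] at h6
        exact huv h6
      have hnu : ‖u‖ ≤ ‖w'‖ := humin _ hw'L hw'span
      by_cases hα0 : α = 0
      · have : ‖w'‖ = |β| * ‖u‖ := by
          rw [hw'eq, hα0, zero_smul, zero_add, norm_smul, Real.norm_eq_abs]
        nlinarith
      · have hray : ¬ SameRay ℝ (α • v) (β • u) := by
          intro hr
          rcases hr with h | h | ⟨r, s, hr, hs, h⟩
          · exact hα0 ((smul_eq_zero.1 h).resolve_right hv0)
          · exact hβ0 ((smul_eq_zero.1 h).resolve_right hu0)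
          · have h2 : (s * β) • u = (r * α) • v := by
              rw [mul_smul, mul_smul, ← h]
            have hsβ : s * β ≠ 0 := mul_ne_zero (ne_of_gt hs) hβ0
            have h3 : u = ((s * β)⁻¹ * (r * α)) • v := by
              rw [mul_smul, ← h2, smul_smul, inv_mul_cancel₀ hsβ, one_smul]
            exact huv (mem_span_singleton.2 ⟨_, h3.symm⟩)
        have hlt : ‖w'‖ < ‖α • v‖ + ‖β • u‖ := by
          rw [hw'eq]; exact norm_add_lt_of_not_sameRay hray
        rw [norm_smul, norm_smul, Real.norm_eq_abs, Real.norm_eq_abs] at hlt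
        nlinarith
    have hα0 : α = 0 := by
      by_contra hα0
      have hw'v : w' = α • v := by rw [hw'eq, hβ0, zero_smul, add_zero]
      have hw'ne : w' ≠ 0 := by
        rw [hw'v]; exact smul_ne_zero hα0 hv0
      have h1 : ‖v‖ ≤ ‖w'‖ := hvmin _ hw'L hw'ne
      have h2 : ‖w'‖ = |α| * ‖v‖ := by rw [hw'v, norm_smul, Real.norm_eq_abs]
      nlinarith
    refine ⟨round a, round b, ?_⟩
    have hw'0 : w' = 0 := by
      rw [hα0, hβ0, zero_smul, zero_smul, add_zero] at hw'eq
      exact hw'eq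
    have : w = (round a : ℝ) • v + (round b : ℝ) • u := by
      rw [hw', sub_sub, sub_eq_zero] at hw'0
      exact hw'0
    rw [this, Int.cast_smul_eq_zsmul, Int.cast_smul_eq_zsmul]
  -- build a ℤ-basis of L from v and u
  set vL : L := ⟨v, hvL⟩ with hvLdef
  set uL : L := ⟨u, huL⟩ with huLdef
  have hliZ : LinearIndependent ℤ ![vL, uL] := by
    rw [LinearIndependent.pair_iff]
    intro s t hst
    have h1 : (s : ℝ) • v + (t : ℝ) • u = 0 := by
      have := congrArg (Subtype.val) hst
      simpa [Int.cast_smul_eq_zsmul] using this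
    have := LinearIndependent.pair_iff.1 hli (s : ℝ) (t : ℝ) h1
    exact ⟨by simpa using this.1, by simpa using this.2⟩
  have hspanZ : ⊤ ≤ span ℤ (Set.range ![vL, uL]) := by
    intro x _
    obtain ⟨m, n, hmn⟩ := key x.1 x.2
    have hx : x = m • vL + n • uL := Subtype.ext (by simpa using hmn)
    rw [hx]
    exact add_mem (zsmul_mem (subset_span (Set.mem_range_self 0)) m) (zsmul_mem (subset_span (Set.mem_range_self 1)) n)
  set bZ : Module.Basis (Fin 2) ℤ L := Module.Basis.mk hliZ hspanZ with hbZ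
  -- transfer to the plain pi type to compute the covolume as a determinant
  set e : (Fin 2 → ℝ) ≃L[ℝ] (EuclideanSpace ℝ (Fin 2)) := (EuclideanSpace.equiv (Fin 2) ℝ).symm with he
  have hmp : MeasurePreserving e volume volume :=
    (EuclideanSpace.volume_preserving_symm_measurableEquiv_toLp (Fin 2)).symm
  have hcov : ZLattice.covolume (ZLattice.comap ℝ L e.toLinearMap) volume
      = ZLattice.covolume L volume := ZLattice.covolume_comap L volume volume hmp
  set bZ' : Module.Basis (Fin 2) ℤ (ZLattice.comap ℝ L e.toLinearEquiv.toLinearMap) :=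
    bZ.ofZLatticeComap ℝ L e.toLinearEquiv with hbZ'
  have hdet : ZLattice.covolume (ZLattice.comap ℝ L e.toLinearMap) volume
      = |(Matrix.of ((↑) ∘ bZ')).det| :=
    ZLattice.covolume_eq_det _ bZ'
  set D : ℝ := v 0 * u 1 - v 1 * u 0 with hD
  have hdetval : (Matrix.of ((↑) ∘ bZ')).det = D := by
    rw [Matrix.det_fin_two]
    have h0 : ((↑) ∘ bZ' : Fin 2 → (Fin 2 → ℝ)) 0 = fun j => v j := by
      ext j
      simp only [hbZ', Function.comp_apply, Module.Basis.ofZLatticeComap_apply]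
      rw [hbZ]
      simp [Module.Basis.coe_mk, he, hvLdef]
      try rfl
    have h1 : ((↑) ∘ bZ' : Fin 2 → (Fin 2 → ℝ)) 1 = fun j => u j := by
      ext j
      simp only [hbZ', Function.comp_apply, Module.Basis.ofZLatticeComap_apply]
      rw [hbZ]
      simp [Module.Basis.coe_mk, he, huLdef]
      try rfl
    simp only [Matrix.of_apply, h0, h1, hD]
  -- numeric computation
  have hipc : ⟪u, v⟫ = u 0 * v 0 + u 1 * v 1 := by
    rw [PiLp.inner_apply, Fin.sum_univ_two]
    simp [RCLike.inner_apply, starRingEnd_apply]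
    ring
  have hnv : ‖v‖ ^ 2 = v 0 ^ 2 + v 1 ^ 2 := by
    rw [← real_inner_self_eq_norm_sq, PiLp.inner_apply, Fin.sum_univ_two]
    simp [RCLike.inner_apply, starRingEnd_apply]
  have hnu : ‖u‖ ^ 2 = u 0 ^ 2 + u 1 ^ 2 := by
    rw [← real_inner_self_eq_norm_sq, PiLp.inner_apply, Fin.sum_univ_two]
    simp [RCLike.inner_apply, starRingEnd_apply]
  have hD2 : D ^ 2 = ‖v‖ ^ 2 * ‖u‖ ^ 2 - ⟪u, v⟫ ^ 2 := by
    rw [hnv, hnu, hipc, hD]; ring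
  have h3 : 3 * (‖v‖ ^ 2 * ‖v‖ ^ 2) ≤ 4 * D ^ 2 := by
    obtain ⟨hip1, hip2⟩ := abs_le.1 hip
    have hip2' : ⟪u, v⟫ ^ 2 ≤ (‖v‖ ^ 2 / 2) ^ 2 := sq_le_sq' hip1 hip2
    have hvu2 : ‖v‖ ^ 2 ≤ ‖u‖ ^ 2 := pow_le_pow_left₀ (norm_nonneg v) hvu 2
    have hmul : ‖v‖ ^ 2 * ‖v‖ ^ 2 ≤ ‖v‖ ^ 2 * ‖u‖ ^ 2 :=
      mul_le_mul_of_nonneg_left hvu2 (sq_nonneg _)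
    nlinarith [hD2]
  -- conclude
  have hs3 : (0 : ℝ) < Real.sqrt 3 := Real.sqrt_pos.2 (by norm_num)
  have hDnn : 0 ≤ |D| := abs_nonneg D
  have hfinal : ‖v‖ ^ 2 ≤ 2 / Real.sqrt 3 * |D| := by
    rw [div_mul_eq_mul_div, le_div_iff₀ hs3]
    have hsq : (‖v‖ ^ 2 * Real.sqrt 3) ^ 2 ≤ (2 * |D|) ^ 2 := by
      have h31 : Real.sqrt 3 ^ 2 = 3 := Real.sq_sqrt (by norm_num)
      have h32 : |D| ^ 2 = D ^ 2 := sq_abs D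
      nlinarith
    have h1 : 0 ≤ ‖v‖ ^ 2 * Real.sqrt 3 := by positivity
    have h2 : 0 ≤ 2 * |D| := by positivity
    nlinarith
  have hsInf_nonneg : 0 ≤ sInf {r : ℝ | ∃ w ∈ L, w ≠ 0 ∧ ‖w‖ = r} :=
    Real.sInf_nonneg (fun r ⟨w, _, _, h⟩ => h ▸ norm_nonneg w)
  have hsInf_le : sInf {r : ℝ | ∃ w ∈ L, w ≠ 0 ∧ ‖w‖ = r} ≤ ‖v‖ :=
    csInf_le ⟨0, fun r ⟨w, _, _, h⟩ => h ▸ norm_nonneg w⟩ ⟨v, hvL, hv0, rfl⟩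
  have heq : |D| = ZLattice.covolume L := by rw [← hdetval, ← hdet, hcov]
  rw [← heq]
  exact le_trans (pow_le_pow_left₀ hsInf_nonneg hsInf_le 2) hfinal
end

section
/- John's theorem quantitative corollary: for any symmetric convex body K ⊂ ℝ^d with John ellipsoid E (the maximal volume ellipsoid inscribed in K), one has E ⊆ K ⊆ √d · E. -/
open Pointwise
open MeasureTheory

section JohnAux

noncomputable def diagEquiv {d : ℕ} (c : Fin d → ℝ) (hc : ∀ i, c i ≠ 0) :
    EuclideanSpace ℝ (Fin d) ≃ₗ[ℝ] EuclideanSpace ℝ (Fin d) where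
  toFun y := WithLp.toLp 2 (fun i => c i * y i)
  invFun y := WithLp.toLp 2 (fun i => (c i)⁻¹ * y i)
  map_add' x y := by ext i; show c i * (x i + y i) = c i * x i + c i * y i; ring
  map_smul' r x := by ext i; show c i * (r * x i) = r * (c i * x i); ring
  left_inv x := by ext i; exact inv_mul_cancel_left₀ (hc i) _
  right_inv x := by ext i; exact mul_inv_cancel_left₀ (hc i) _

lemma diagEquiv_apply {d : ℕ} (c : Fin d → ℝ) (hc : ∀ i, c i ≠ 0)
    (y : EuclideanSpace ℝ (Fin d)) (i : Fin d) : diagEquiv c hc y i = c i * y i := rfl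

lemma diagEquiv_det {d : ℕ} (c : Fin d → ℝ) (hc : ∀ i, c i ≠ 0) :
    LinearMap.det ((diagEquiv c hc : EuclideanSpace ℝ (Fin d) ≃ₗ[ℝ] EuclideanSpace ℝ (Fin d)) :
      EuclideanSpace ℝ (Fin d) →ₗ[ℝ] EuclideanSpace ℝ (Fin d)) = ∏ i, c i := by
  classical
  set b := (EuclideanSpace.basisFun (Fin d) ℝ).toBasis
  rw [← LinearMap.det_toMatrix b]
  have hMat : LinearMap.toMatrix b b
      ((diagEquiv c hc : EuclideanSpace ℝ (Fin d) →ₗ[ℝ] EuclideanSpace ℝ (Fin d)))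
      = Matrix.diagonal c := by
    ext i j
    rw [LinearMap.toMatrix_apply]
    simp only [b, OrthonormalBasis.coe_toBasis, OrthonormalBasis.coe_toBasis_repr_apply,
      EuclideanSpace.basisFun_apply, EuclideanSpace.basisFun_repr, LinearEquiv.coe_coe]
    rw [diagEquiv_apply]
    rw [EuclideanSpace.single_apply, Matrix.diagonal_apply]
    by_cases h : i = j <;> simp [h, eq_comm]
  rw [hMat, Matrix.det_diagonal]

lemma exists_lam {s a b t W : ℝ} (hs : 1 < s) (ha : 1 ≤ a) (hb0 : 0 < b) (hb1 : b ≤ 1)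
    (hcon : a ^ 2 + b ^ 2 * (s ^ 2 - 1) = s ^ 2) (ht0 : 0 ≤ t) (hta : t ≤ a) (hW : 0 ≤ W)
    (hWa : a ^ 2 * W ≤ a ^ 2 - t ^ 2) :
    ∃ lam : ℝ, 0 ≤ lam ∧ lam < 1 ∧ (t - lam * s) ^ 2 + b ^ 2 * W ≤ (1 - lam) ^ 2 := by
  have ha0 : (0:ℝ) < a := lt_of_lt_of_le one_pos ha
  have hA : (0:ℝ) < s ^ 2 - 1 := by nlinarith
  have hbA : (0:ℝ) < b ^ 2 * (s ^ 2 - 1) := by positivity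
  have ha2s : a ^ 2 < s ^ 2 := by linarith
  have hts : t < s := by nlinarith
  have hb2 : b ^ 2 ≤ 1 := by nlinarith
  have ha21 : (1:ℝ) ≤ a ^ 2 := by nlinarith
  rcases le_or_gt (s * t) 1 with h | h
  · refine ⟨0, le_refl 0, one_pos, ?_⟩
    have h1 : b ^ 2 * (a ^ 2 * W) ≤ b ^ 2 * (a ^ 2 - t ^ 2) :=
      mul_le_mul_of_nonneg_left hWa (sq_nonneg b)
    have hst : 0 ≤ s * t := mul_nonneg (by linarith) ht0
    have hst2 : s ^ 2 * t ^ 2 ≤ 1 := by nlinarith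
    have h2 : (0:ℝ) ≤ (1 - b ^ 2) * (1 - s ^ 2 * t ^ 2) :=
      mul_nonneg (by linarith) (by linarith)
    have h3 : (0:ℝ) ≤ (a ^ 2 - 1) * (1 - b ^ 2) :=
      mul_nonneg (by linarith) (by linarith)
    have h4 : t ^ 2 * (a ^ 2 - b ^ 2) = t ^ 2 * (s ^ 2 * (1 - b ^ 2)) := by
      have : a ^ 2 - b ^ 2 = s ^ 2 * (1 - b ^ 2) := by linarith [hcon]
      rw [this]
    have hmain : a ^ 2 * ((t - 0 * s) ^ 2 + b ^ 2 * W) ≤ a ^ 2 * (1 - 0) ^ 2 := by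
      nlinarith [h1, h2, h3, h4]
    exact le_of_mul_le_mul_left hmain (by positivity)
  · have hD : (0:ℝ) < s ^ 2 - 1 := hA
    refine ⟨(s * t - 1) / (s ^ 2 - 1), div_nonneg (by linarith) hD.le, ?_, ?_⟩
    · rw [div_lt_one hD]; nlinarith
    · have e1 : t - (s * t - 1) / (s ^ 2 - 1) * s = (s - t) / (s ^ 2 - 1) := by
        field_simp; ring
      have e2 : 1 - (s * t - 1) / (s ^ 2 - 1) = s * (s - t) / (s ^ 2 - 1) := by
        field_simp; ring
      rw [e1, e2, div_pow, div_pow, ← sub_nonneg]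
      have e3 : (s * (s - t)) ^ 2 / (s ^ 2 - 1) ^ 2 -
          ((s - t) ^ 2 / (s ^ 2 - 1) ^ 2 + b ^ 2 * W)
          = ((s * (s - t)) ^ 2 - (s - t) ^ 2 - b ^ 2 * W * (s ^ 2 - 1) ^ 2) /
            (s ^ 2 - 1) ^ 2 := by
        field_simp
        ring
      rw [e3]
      apply div_nonneg _ (sq_nonneg _)
      have h1 : (s ^ 2 - 1) * (a ^ 2 * W) ≤ (s ^ 2 - 1) * (a ^ 2 - t ^ 2) :=
        mul_le_mul_of_nonneg_left hWa hD.le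
      have hba : b ^ 2 * (s ^ 2 - 1) = s ^ 2 - a ^ 2 := by linarith
      have hsa : (0:ℝ) ≤ s ^ 2 - a ^ 2 := by rw [← hba]; positivity
      have k1' : a ^ 2 * (b ^ 2 * W * (s ^ 2 - 1) ^ 2)
          = (s ^ 2 - a ^ 2) * ((s ^ 2 - 1) * (a ^ 2 * W)) := by rw [← hba]; ring
      have k2 := mul_le_mul_of_nonneg_left h1 hsa
      have k3 : a ^ 2 * ((s * (s - t)) ^ 2 - (s - t) ^ 2)
            - (s ^ 2 - a ^ 2) * ((s ^ 2 - 1) * (a ^ 2 - t ^ 2))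
          = (s ^ 2 - 1) * (s * t - a ^ 2) ^ 2 := by ring
      have hfin : 0 ≤ a ^ 2 * ((s * (s - t)) ^ 2 - (s - t) ^ 2 - b ^ 2 * W * (s ^ 2 - 1) ^ 2) := by
        linarith [k1', k2, k3, mul_nonneg hD.le (sq_nonneg (s * t - a ^ 2))]
      exact le_of_mul_le_mul_left (by simpa using hfin) (by positivity : (0:ℝ) < a ^ 2)

lemma exists_ab (d : ℕ) (hd : 0 < d) {s : ℝ} (hsd : (d : ℝ) < s ^ 2) (hs1 : 1 < s) :
    ∃ a b : ℝ, 1 ≤ a ∧ 0 < b ∧ b ≤ 1 ∧ a ^ 2 + b ^ 2 * (s ^ 2 - 1) = s ^ 2 ∧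
      1 < a * b ^ (d - 1) := by
  have hd1 : (1:ℝ) ≤ d := by exact_mod_cast hd
  set A : ℝ := s ^ 2 - 1 with hAdef
  have hA : 0 < A := by nlinarith
  have hm : ((d:ℝ) - 1) < A := by simp only [hAdef]; linarith
  have hm0 : (0:ℝ) ≤ (d:ℝ) - 1 := by linarith
  set ε : ℝ := (A - ((d:ℝ) - 1)) / (2 * A * d) with hεdef
  have hden : (0:ℝ) < 2 * A * d := by positivity
  have hε0 : 0 < ε := div_pos (by linarith) hden
  have hε1 : ε < 1 := by rw [hεdef, div_lt_one hden]; nlinarith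
  have hKey : 2 * A * (d:ℝ) * ε = A - ((d:ℝ) - 1) := by
    rw [hεdef]; field_simp
  have h1εA : (0:ℝ) < 1 + ε * A := by positivity
  have h1ε : (0:ℝ) < 1 - ε := by linarith
  refine ⟨Real.sqrt (1 + ε * A), Real.sqrt (1 - ε), ?_, Real.sqrt_pos.2 h1ε,
    Real.sqrt_le_one.2 (by linarith), ?_, ?_⟩
  · have h := Real.sqrt_le_sqrt (show (1:ℝ) ≤ 1 + ε * A by nlinarith)
    rwa [Real.sqrt_one] at h
  · rw [Real.sq_sqrt h1εA.le, Real.sq_sqrt h1ε.le]; simp only [hAdef]; ring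
  · have ha2 : Real.sqrt (1 + ε * A) ^ 2 = 1 + ε * A := Real.sq_sqrt h1εA.le
    have hb2 : Real.sqrt (1 - ε) ^ 2 = 1 - ε := Real.sq_sqrt h1ε.le
    have hcast : ((d - 1 : ℕ) : ℝ) = (d:ℝ) - 1 := by
      rw [Nat.cast_sub hd]; simp
    have hbern : 1 + ((d:ℝ) - 1) * (-ε) ≤ (1 + (-ε)) ^ (d - 1) := by
      have := one_add_mul_le_pow (a := -ε) (by linarith) (d - 1)
      rwa [hcast] at this
    have hb2pow : (1:ℝ) - ((d:ℝ) - 1) * ε ≤ (1 - ε) ^ (d - 1) := by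
      have h : (1:ℝ) + (-ε) = 1 - ε := by ring
      rw [h] at hbern; linarith [hbern]
    have hstep : (1 + ε * A) * (1 - ((d:ℝ) - 1) * ε) ≤ (1 + ε * A) * (1 - ε) ^ (d - 1) :=
      mul_le_mul_of_nonneg_left hb2pow h1εA.le
    have hgain : 1 < (1 + ε * A) * (1 - ((d:ℝ) - 1) * ε) := by
      nlinarith [hKey, mul_pos (mul_pos hA hε0) hε0, sq_nonneg ε]
    have hsq : 1 < (Real.sqrt (1 + ε * A) * Real.sqrt (1 - ε) ^ (d - 1)) ^ 2 := by
      rw [mul_pow, ha2, ← pow_right_comm, hb2]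
      linarith [hstep, hgain]
    have hpos : 0 < Real.sqrt (1 + ε * A) * Real.sqrt (1 - ε) ^ (d - 1) := by positivity
    nlinarith [hsq, hpos]

end JohnAux

set_option maxHeartbeats 1000000 in
/-- John's theorem for symmetric convex bodies: if `E = T(B(0,1))` is the
ellipsoid of maximal volume contained in the symmetric convex body `K ⊂ ℝ^d`,
then `E ⊆ K ⊆ √d · E`. -/
theorem stmt_17 {d : ℕ} (hd : 0 < d) (K : Set (EuclideanSpace ℝ (Fin d)))
    (hKc : IsCompact K) (hKconv : Convex ℝ K) (hKsym : ∀ x ∈ K, -x ∈ K)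
    (hK0 : (0 : EuclideanSpace ℝ (Fin d)) ∈ interior K)
    (T : EuclideanSpace ℝ (Fin d) ≃ₗ[ℝ] EuclideanSpace ℝ (Fin d))
    (hTK : T '' Metric.closedBall 0 1 ⊆ K)
    (hmax : ∀ S : EuclideanSpace ℝ (Fin d) ≃ₗ[ℝ] EuclideanSpace ℝ (Fin d),
      S '' Metric.closedBall 0 1 ⊆ K →
        volume (S '' Metric.closedBall 0 1)
          ≤ volume (T '' Metric.closedBall 0 1)) :
    T '' Metric.closedBall 0 1 ⊆ K ∧
      K ⊆ Real.sqrt d • (T '' Metric.closedBall 0 1) := by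
  classical
  have hd1 : (1:ℝ) ≤ d := by exact_mod_cast hd
  set B : Set (EuclideanSpace ℝ (Fin d)) := Metric.closedBall 0 1 with hBdef
  refine ⟨hTK, ?_⟩
  have hdpos : (0:ℝ) < Real.sqrt d := Real.sqrt_pos.2 (by exact_mod_cast hd)
  intro y hy
  have hxd : ‖T.symm y‖ ≤ Real.sqrt d := by
    by_contra hgt
    push_neg at hgt
    set x := T.symm y with hxdef
    set s := ‖x‖ with hsdef
    have hs0 : 0 < s := lt_trans hdpos hgt
    have hsd : (d:ℝ) < s ^ 2 := by
      have h2 : Real.sqrt d ^ 2 < s ^ 2 := by nlinarith [hgt, hdpos]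
      rwa [Real.sq_sqrt (by positivity : (0:ℝ) ≤ (d:ℝ))] at h2
    have hs1 : 1 < s := by nlinarith [hd1]
    obtain ⟨a, b, ha1, hb0, hb1, hcon, hab⟩ := exists_ab d hd hsd hs1
    have ha0 : (0:ℝ) < a := lt_of_lt_of_le one_pos ha1
    -- the body pulled back by T
    set K' : Set (EuclideanSpace ℝ (Fin d)) := ⇑T ⁻¹' K with hK'def
    have hBK' : B ⊆ K' := fun z hz => hTK ⟨z, hz, rfl⟩
    have hK'conv : Convex ℝ K' := hKconv.linear_preimage (T : EuclideanSpace ℝ (Fin d) →ₗ[ℝ] EuclideanSpace ℝ (Fin d))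
    have hxK' : x ∈ K' := by
      show T x ∈ K
      rw [hxdef, T.apply_symm_apply]
      exact hy
    have hnxK' : -x ∈ K' := by
      show T (-x) ∈ K
      rw [map_neg]
      exact hKsym _ hxK'
    -- unit vector in the direction of x, and adapted orthonormal basis
    set u : EuclideanSpace ℝ (Fin d) := s⁻¹ • x with hudef
    have hu : ‖u‖ = 1 := by
      rw [hudef, norm_smul, norm_inv, Real.norm_eq_abs, abs_of_pos hs0, ← hsdef,
        inv_mul_cancel₀ hs0.ne']
    set i0 : Fin d := ⟨0, hd⟩ with hi0def
    have hcard : Module.finrank ℝ (EuclideanSpace ℝ (Fin d)) = Fintype.card (Fin d) := by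
      simp [finrank_euclideanSpace]
    have horto : Orthonormal ℝ (Set.restrict {i0} (fun _ : Fin d => u)) := by
      refine ⟨fun i => hu, ?_⟩
      intro i j hij
      exfalso
      apply hij
      have hi := i.2
      have hj := j.2
      simp only [Set.mem_singleton_iff] at hi hj
      exact Subtype.ext (hi.trans hj.symm)
    obtain ⟨φ, hφ⟩ := horto.exists_orthonormalBasis_extension_of_card_eq hcard
    have hφ0 : φ i0 = u := hφ i0 rfl
    -- the stretched ellipsoid map
    set c : Fin d → ℝ := fun i => if i = i0 then a else b with hcdef
    have hc : ∀ i, c i ≠ 0 := by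
      intro i
      by_cases h : i = i0 <;> simp [hcdef, h, ha0.ne', hb0.ne']
    set D := diagEquiv c hc with hDdef
    set S : EuclideanSpace ℝ (Fin d) ≃ₗ[ℝ] EuclideanSpace ℝ (Fin d) :=
      φ.repr.toLinearEquiv.trans (D.trans φ.repr.symm.toLinearEquiv) with hSdef
    -- containment of the new ellipsoid in K'
    have hSK' : ∀ z ∈ B, S z ∈ K' := by
      intro z hz
      set v : EuclideanSpace ℝ (Fin d) := φ.repr z with hvdef
      have hvn : ‖v‖ ≤ 1 := by
        rw [hvdef, φ.repr.norm_map]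
        exact mem_closedBall_zero_iff.1 hz
      have hV : ∑ i, v i ^ 2 ≤ 1 := by
        have h1 : ∑ i, v i ^ 2 = ‖v‖ ^ 2 := by
          rw [EuclideanSpace.norm_eq, Real.sq_sqrt (by positivity)]
          congr 1
          funext i
          rw [Real.norm_eq_abs, sq_abs]
        rw [h1]
        nlinarith [norm_nonneg v]
      set w0 : ℝ := v i0 with hw0def
      have hw02 : w0 ^ 2 ≤ 1 :=
        le_trans (Finset.single_le_sum (f := fun i => v i ^ 2)
          (fun i _ => sq_nonneg _) (Finset.mem_univ i0)) hV
      have hw0abs : |w0| ≤ 1 := by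
        rw [← Real.sqrt_one, ← Real.sqrt_sq_eq_abs]
        exact Real.sqrt_le_sqrt (by linarith)
      set t : ℝ := a * |w0| with htdef
      have ht0 : 0 ≤ t := mul_nonneg ha0.le (abs_nonneg _)
      have hta : t ≤ a := by
        rw [htdef]
        nlinarith [hw0abs, abs_nonneg w0]
      set W : ℝ := ∑ i ∈ Finset.univ.erase i0, v i ^ 2 with hWdef
      have hW0 : 0 ≤ W := Finset.sum_nonneg fun i _ => sq_nonneg _
      have hsplit : w0 ^ 2 + W = ∑ i, v i ^ 2 :=
        Finset.add_sum_erase _ (fun i => v i ^ 2) (Finset.mem_univ i0)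
      have ht2 : t ^ 2 = a ^ 2 * w0 ^ 2 := by rw [htdef, mul_pow, sq_abs]
      have hWa : a ^ 2 * W ≤ a ^ 2 - t ^ 2 := by
        have hWle : W ≤ 1 - w0 ^ 2 := by linarith
        nlinarith [mul_le_mul_of_nonneg_left hWle (sq_nonneg a)]
      obtain ⟨lam, hlam0, hlam1, hkey⟩ := exists_lam hs1 ha1 hb0 hb1 hcon ht0 hta hW0 hWa
      have h1lam : 0 < 1 - lam := by linarith
      set ep : ℝ := if 0 ≤ w0 then 1 else -1 with hepdef
      set xc : EuclideanSpace ℝ (Fin d) := s • EuclideanSpace.single i0 1 with hxcdef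
      set q : EuclideanSpace ℝ (Fin d) := D v - (lam * ep) • xc with hqdef
      set zc : EuclideanSpace ℝ (Fin d) := (1 - lam)⁻¹ • q with hzcdef
      have hqsum : D v = (lam * ep) • xc + (1 - lam) • zc := by
        rw [hzcdef, smul_inv_smul₀ h1lam.ne', hqdef]
        abel
      -- coordinates of q
      have hDv : ∀ i, D v i = c i * v i := fun i => rfl
      have hqa : ∀ i, q i = c i * v i - (lam * ep) * (s * (EuclideanSpace.single i0 (1:ℝ) i)) :=
        fun i => rfl
      have hq_i0 : q i0 = a * w0 - lam * ep * s := by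
        rw [hqa i0, EuclideanSpace.single_apply, if_pos rfl]
        have hci0 : c i0 = a := if_pos rfl
        rw [hci0, ← hw0def]
        ring
      have hq_ne : ∀ i ∈ Finset.univ.erase i0, q i ^ 2 = b ^ 2 * v i ^ 2 := by
        intro i hi
        have hne : i ≠ i0 := Finset.ne_of_mem_erase hi
        rw [hqa i, EuclideanSpace.single_apply, if_neg hne]
        have hci : c i = b := if_neg hne
        rw [hci]
        ring
      have hsum_split : ∑ i, q i ^ 2 = q i0 ^ 2 + b ^ 2 * W := by
        rw [← Finset.add_sum_erase _ (fun i => q i ^ 2) (Finset.mem_univ i0)]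
        congr 1
        rw [Finset.sum_congr rfl hq_ne, ← Finset.mul_sum]
      have hqi0sq : q i0 ^ 2 = (t - lam * s) ^ 2 := by
        rw [hq_i0]
        by_cases h : 0 ≤ w0
        · rw [hepdef, if_pos h, htdef, abs_of_nonneg h]; ring
        · rw [hepdef, if_neg h, htdef, abs_of_neg (lt_of_not_ge h)]; ring
      have hqnorm2 : ∑ i, q i ^ 2 ≤ (1 - lam) ^ 2 := by
        rw [hsum_split, hqi0sq]
        exact hkey
      have hqn : ‖q‖ ≤ 1 - lam := by
        rw [EuclideanSpace.norm_eq]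
        have h1 : ∑ i, ‖q i‖ ^ 2 = ∑ i, q i ^ 2 := by
          congr 1; funext i; rw [Real.norm_eq_abs, sq_abs]
        rw [h1]
        calc Real.sqrt (∑ i, q i ^ 2) ≤ Real.sqrt ((1 - lam) ^ 2) :=
              Real.sqrt_le_sqrt hqnorm2
          _ = 1 - lam := Real.sqrt_sq h1lam.le
      have hzcn : ‖zc‖ ≤ 1 := by
        rw [hzcdef, norm_smul, norm_inv, Real.norm_eq_abs, abs_of_pos h1lam,
          ← div_eq_inv_mul, div_le_one h1lam]
        exact hqn
      -- back to the body
      have hSz : S z = lam • (ep • x) + (1 - lam) • (φ.repr.symm zc) := by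
        have h0 : S z = φ.repr.symm (D v) := by
          simp [hSdef, hvdef, LinearEquiv.trans_apply]
        rw [h0, hqsum, map_add, _root_.map_smul, _root_.map_smul, _root_.map_smul,
          OrthonormalBasis.repr_symm_single, hφ0, hudef]
        have h6 : s • s⁻¹ • x = x := by rw [smul_smul, mul_inv_cancel₀ hs0.ne', one_smul]
        rw [h6, ← smul_smul]
      have hepx : ep • x ∈ K' := by
        by_cases h : 0 ≤ w0
        · rw [hepdef, if_pos h, one_smul]; exact hxK'
        · rw [hepdef, if_neg h, neg_one_smul]; exact hnxK'
      have hzK' : φ.repr.symm zc ∈ K' := by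
        apply hBK'
        rw [hBdef, mem_closedBall_zero_iff, LinearIsometryEquiv.norm_map]
        exact hzcn
      rw [hSz]
      exact hK'conv hepx hzK' hlam0 h1lam.le (by ring)
    -- the image of the new map is in K
    have himg : ⇑(S.trans T) '' B ⊆ K := by
      rintro _ ⟨w, hw, rfl⟩
      rw [LinearEquiv.trans_apply]
      exact hSK' w hw
    -- determinants
    have hdetS : LinearMap.det (S : EuclideanSpace ℝ (Fin d) →ₗ[ℝ] EuclideanSpace ℝ (Fin d))
        = a * b ^ (d - 1) := by
      have h1 : (S : EuclideanSpace ℝ (Fin d) →ₗ[ℝ] EuclideanSpace ℝ (Fin d))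
          = (φ.repr.symm.toLinearEquiv : EuclideanSpace ℝ (Fin d) →ₗ[ℝ] EuclideanSpace ℝ (Fin d))
            ∘ₗ (D : EuclideanSpace ℝ (Fin d) →ₗ[ℝ] EuclideanSpace ℝ (Fin d))
            ∘ₗ ((φ.repr.symm.toLinearEquiv).symm : EuclideanSpace ℝ (Fin d) →ₗ[ℝ] EuclideanSpace ℝ (Fin d)) := by
        ext z
        simp [hSdef, LinearEquiv.trans_apply]
      rw [h1, LinearMap.det_conj, diagEquiv_det]
      rw [← Finset.mul_prod_erase Finset.univ c (Finset.mem_univ i0)]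
      have hrest : ∀ i ∈ Finset.univ.erase i0, c i = b := by
        intro i hi
        exact if_neg (Finset.ne_of_mem_erase hi)
      rw [Finset.prod_congr rfl hrest, Finset.prod_const, Finset.card_erase_of_mem
        (Finset.mem_univ i0), Finset.card_univ, Fintype.card_fin]
      have hca : c i0 = a := if_pos rfl
      rw [hca]
    -- volume comparison
    have hv1 : volume (⇑(S.trans T) '' B)
        = ENNReal.ofReal |LinearMap.det ((S.trans T : EuclideanSpace ℝ (Fin d) ≃ₗ[ℝ] EuclideanSpace ℝ (Fin d)) : EuclideanSpace ℝ (Fin d) →ₗ[ℝ] EuclideanSpace ℝ (Fin d))| * volume B := by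
      have := volume.addHaar_image_linearMap
        ((S.trans T : EuclideanSpace ℝ (Fin d) ≃ₗ[ℝ] EuclideanSpace ℝ (Fin d)) :
          EuclideanSpace ℝ (Fin d) →ₗ[ℝ] EuclideanSpace ℝ (Fin d)) B
      simpa using this
    have hv2 : volume (⇑T '' B)
        = ENNReal.ofReal |LinearMap.det ((T : EuclideanSpace ℝ (Fin d) ≃ₗ[ℝ] EuclideanSpace ℝ (Fin d)) : EuclideanSpace ℝ (Fin d) →ₗ[ℝ] EuclideanSpace ℝ (Fin d))| * volume B := by
      have := volume.addHaar_image_linearMap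
        ((T : EuclideanSpace ℝ (Fin d) ≃ₗ[ℝ] EuclideanSpace ℝ (Fin d)) :
          EuclideanSpace ℝ (Fin d) →ₗ[ℝ] EuclideanSpace ℝ (Fin d)) B
      simpa using this
    have hdet_comp : LinearMap.det ((S.trans T : EuclideanSpace ℝ (Fin d) ≃ₗ[ℝ] EuclideanSpace ℝ (Fin d)) : EuclideanSpace ℝ (Fin d) →ₗ[ℝ] EuclideanSpace ℝ (Fin d))
        = LinearMap.det ((T : EuclideanSpace ℝ (Fin d) ≃ₗ[ℝ] EuclideanSpace ℝ (Fin d)) : EuclideanSpace ℝ (Fin d) →ₗ[ℝ] EuclideanSpace ℝ (Fin d))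
          * LinearMap.det ((S : EuclideanSpace ℝ (Fin d) ≃ₗ[ℝ] EuclideanSpace ℝ (Fin d)) : EuclideanSpace ℝ (Fin d) →ₗ[ℝ] EuclideanSpace ℝ (Fin d)) := by
      have h1 : ((S.trans T : EuclideanSpace ℝ (Fin d) ≃ₗ[ℝ] EuclideanSpace ℝ (Fin d)) : EuclideanSpace ℝ (Fin d) →ₗ[ℝ] EuclideanSpace ℝ (Fin d))
          = ((T : EuclideanSpace ℝ (Fin d) ≃ₗ[ℝ] EuclideanSpace ℝ (Fin d)) : EuclideanSpace ℝ (Fin d) →ₗ[ℝ] EuclideanSpace ℝ (Fin d))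
            ∘ₗ ((S : EuclideanSpace ℝ (Fin d) ≃ₗ[ℝ] EuclideanSpace ℝ (Fin d)) : EuclideanSpace ℝ (Fin d) →ₗ[ℝ] EuclideanSpace ℝ (Fin d)) := by
        ext z
        simp [LinearEquiv.trans_apply]
      rw [h1, LinearMap.det_comp]
    have hmaxle := hmax (S.trans T) himg
    rw [hv1, hv2, hdet_comp] at hmaxle
    have hdetT : LinearMap.det ((T : EuclideanSpace ℝ (Fin d) ≃ₗ[ℝ] EuclideanSpace ℝ (Fin d)) : EuclideanSpace ℝ (Fin d) →ₗ[ℝ] EuclideanSpace ℝ (Fin d)) ≠ 0 :=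
      T.isUnit_det'.ne_zero
    have hB0 : volume B ≠ 0 := (Metric.measure_closedBall_pos volume _ one_pos).ne'
    have hBtop : volume B ≠ ⊤ := measure_closedBall_lt_top.ne
    have hle := (ENNReal.mul_le_mul_iff_left hB0 hBtop).1 hmaxle
    rw [ENNReal.ofReal_le_ofReal_iff (abs_nonneg _)] at hle
    rw [abs_mul, hdetS] at hle
    have habs : |a * b ^ (d - 1)| = a * b ^ (d - 1) := abs_of_pos (by positivity)
    rw [habs] at hle
    nlinarith [abs_pos.mpr hdetT, hab, hle]
  -- now conclude the inclusion
  have hmem : (Real.sqrt d)⁻¹ • T.symm y ∈ B := by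
    rw [hBdef, mem_closedBall_zero_iff, norm_smul, norm_inv, Real.norm_eq_abs,
      abs_of_pos hdpos, ← div_eq_inv_mul, div_le_one hdpos]
    exact hxd
  refine Set.mem_smul_set.2 ⟨T ((Real.sqrt d)⁻¹ • T.symm y), ⟨_, hmem, rfl⟩, ?_⟩
  rw [← _root_.map_smul, smul_smul, mul_inv_cancel₀ hdpos.ne', one_smul, T.apply_symm_apply]
end
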